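/- Let ẑ, w ∈ ℝ³ with ‖ẑ‖ = 1, w ≠ 0 and ẑ × w ≠ 0. Set k = −w, x̂ = (ẑ × k)/‖ẑ × k‖ and ŷ = ẑ × x̂. Then the projection of −w onto the plane orthogonal to ẑ satisfies −w + ⟨w, ẑ⟩·ẑ = −‖ẑ × w‖·ŷ; in particular it is orthogonal to x̂ and parallel to ŷ. -/

import Mathlib

open scoped RealInnerProductSpace

noncomputable def cross3 (a b : EuclideanSpace ℝ (Fin 3)) : EuclideanSpace ℝ (Fin 3) :=
  (EuclideanSpace.equiv (Fin 3) ℝ).symm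
    (crossProduct ((EuclideanSpace.equiv (Fin 3) ℝ) a) ((EuclideanSpace.equiv (Fin 3) ℝ) b))

lemma cross3_apply (a b : EuclideanSpace ℝ (Fin 3)) :
    cross3 a b = ![a 1 * b 2 - a 2 * b 1, a 2 * b 0 - a 0 * b 2, a 0 * b 1 - a 1 * b 0] := by
  funext i
  fin_cases i <;> simp [cross3, crossProduct] <;> ring

lemma cross3_neg_right (a b : EuclideanSpace ℝ (Fin 3)) :
    cross3 a (-b) = -cross3 a b := by
  ext i
  fin_cases i <;> simp [cross3_apply] <;> ring

lemma cross3_smul_right (c : ℝ) (a b : EuclideanSpace ℝ (Fin 3)) :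
    cross3 a (c • b) = c • cross3 a b := by
  ext i
  fin_cases i <;> simp [cross3_apply] <;> ring

lemma cross3_triple (a b : EuclideanSpace ℝ (Fin 3)) :
    cross3 a (cross3 a b) = ⟪a, b⟫ • a - ⟪a, a⟫ • b := by
  ext i
  fin_cases i <;>
    simp [cross3_apply, PiLp.inner_apply, Fin.sum_univ_three, PiLp.sub_apply, PiLp.smul_apply,
      smul_eq_mul, -inner_self_eq_norm_sq_to_K] <;> ring

lemma inner_cross3_right (a b : EuclideanSpace ℝ (Fin 3)) :
    ⟪cross3 a b, b⟫ = 0 := by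
  simp [cross3_apply, PiLp.inner_apply, Fin.sum_univ_three]
  ring

/-- zero-drift-angle alignment: choosing k = −w makes the projection of −w
onto the sensor plane equal to −‖ẑ × w‖ ŷ, hence orthogonal to x̂ and parallel to ŷ. -/
theorem stmt6 (z w : EuclideanSpace ℝ (Fin 3))
    (hz : ‖z‖ = 1) (hw : w ≠ 0) (hzw : cross3 z w ≠ 0)
    (k x y : EuclideanSpace ℝ (Fin 3))
    (hk : k = -w)
    (hx : x = ‖cross3 z k‖⁻¹ • cross3 z k)
    (hy : y = cross3 z x) :
    (-w + ⟪w, z⟫ • z = -‖cross3 z w‖ • y) ∧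
      ⟪-w + ⟪w, z⟫ • z, x⟫ = 0 ∧
      (∃ c : ℝ, -w + ⟪w, z⟫ • z = c • y) := by
  have hzk : cross3 z k = -cross3 z w := by rw [hk, cross3_neg_right]
  have hn : ‖cross3 z k‖ = ‖cross3 z w‖ := by rw [hzk, norm_neg]
  have hne : ‖cross3 z w‖ ≠ 0 := norm_ne_zero_iff.mpr hzw
  have hy' : y = -(‖cross3 z w‖⁻¹ • cross3 z (cross3 z w)) := by
    rw [hy, hx, hn, hzk, cross3_smul_right, cross3_neg_right, smul_neg]
  have hzz : ⟪z, z⟫ = 1 := by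
    rw [real_inner_self_eq_norm_sq, hz]; norm_num
  have hmain : -w + ⟪w, z⟫ • z = -‖cross3 z w‖ • y := by
    rw [hy', cross3_triple, hzz, real_inner_comm z w]
    rw [smul_neg, neg_smul, neg_neg, smul_smul, mul_inv_cancel₀ hne, one_smul, one_smul]
    abel
  refine ⟨hmain, ?_, ⟨-‖cross3 z w‖, hmain⟩⟩
  rw [hmain, hy]
  rw [inner_smul_left]
  have h0 : ⟪cross3 z x, x⟫ = 0 := inner_cross3_right z x
  simp [h0]
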